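/- Gaffney-type theorem for graphs: Let G be an infinite connected graph with vertex degrees uniformly bounded by N, and H = Δ_{1,a} + W a Schrödinger operator on G. Suppose the weighted path metric δ_a, where the length of an edge {x,y} is 1/√(a_{xy}), is complete, and suppose there is k ∈ ℝ with ⟨Hg,g⟩ ≥ k‖g‖² for all finitely supported g. Then H with domain C₀(V) is essentially self-adjoint; equivalently, for every λ < k − 1, the only ℓ²(V) solution of Hv = λv is v ≡ 0. -/

import Mathlib

open Finset

variable {V : Type*}

/-- Weighted Laplacian: `(Δ_{ω,c} f)(x) = (1/ω_x²) Σ_{y∼x} c_{xy}(f(x) − f(y))`. -/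
noncomputable def lapW (G : SimpleGraph V) [∀ x : V, Fintype (G.neighborSet x)]
    (ω : V → ℝ) (c : V → V → ℝ) (f : V → ℝ) (x : V) : ℝ :=
  (1 / (ω x) ^ 2) * ∑ y ∈ G.neighborFinset x, c x y * (f x - f y)

/-- Schrödinger operator: `(Δ_{1,a} + W) f (x) = Σ_{y∼x} a_{xy}(f(x) − f(y)) + W(x) f(x)`. -/
noncomputable def schrod (G : SimpleGraph V) [∀ x : V, Fintype (G.neighborSet x)]
    (a : V → V → ℝ) (W : V → ℝ) (f : V → ℝ) (x : V) : ℝ :=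
  (∑ y ∈ G.neighborFinset x, a x y * (f x - f y)) + W x * f x

/-- Length of a walk, where an edge `{x,y}` has length `1/√(a_{xy})`. -/
noncomputable def wlen (G : SimpleGraph V) (a : V → V → ℝ) {x y : V} (p : G.Walk x y) : ℝ :=
  (p.darts.map fun d => 1 / Real.sqrt (a d.toProd.1 d.toProd.2)).sum

/-- The weighted path metric `δ_a` on the graph. -/
noncomputable def pdist (G : SimpleGraph V) (a : V → V → ℝ) (x y : V) : ℝ :=
  sInf {L | ∃ p : G.Walk x y, wlen G a p = L}

/-- Metric completeness of `(V, δ_a)`: every Cauchy sequence converges. -/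
def metComplete (G : SimpleGraph V) (a : V → V → ℝ) : Prop :=
  ∀ u : ℕ → V,
    (∀ ε : ℝ, 0 < ε → ∃ N : ℕ, ∀ m ≥ N, ∀ n ≥ N, pdist G a (u m) (u n) < ε) →
      ∃ x : V, ∀ ε : ℝ, 0 < ε → ∃ N : ℕ, ∀ n ≥ N, pdist G a (u n) x < ε

section aux
open SimpleGraph

noncomputable def elen (a : V → V → ℝ) (x y : V) : ℝ := 1 / Real.sqrt (a x y)

lemma elen_nonneg (a : V → V → ℝ) (x y : V) : 0 ≤ elen a x y :=
  div_nonneg zero_le_one (Real.sqrt_nonneg _)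

lemma elen_pos {G : SimpleGraph V} {a : V → V → ℝ} (ha : ∀ x y, G.Adj x y → 0 < a x y)
    {x y : V} (h : G.Adj x y) : 0 < elen a x y :=
  div_pos one_pos (Real.sqrt_pos.2 (ha x y h))

lemma wlen_nil {G : SimpleGraph V} {a : V → V → ℝ} {x : V} :
    wlen G a (Walk.nil : G.Walk x x) = 0 := rfl

lemma wlen_cons {G : SimpleGraph V} {a : V → V → ℝ} {x y z : V} (h : G.Adj x y)
    (p : G.Walk y z) : wlen G a (Walk.cons h p) = elen a x y + wlen G a p := by
  simp [wlen, elen, Walk.darts_cons]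

lemma wlen_nonneg {G : SimpleGraph V} {a : V → V → ℝ} {x y : V} (p : G.Walk x y) :
    0 ≤ wlen G a p := by
  induction p with
  | nil => simp [wlen_nil]
  | cons h p ih => rw [wlen_cons]; exact add_nonneg (elen_nonneg _ _ _) ih

lemma wlen_append {G : SimpleGraph V} {a : V → V → ℝ} {x y z : V} (p : G.Walk x y)
    (q : G.Walk y z) : wlen G a (p.append q) = wlen G a p + wlen G a q := by
  simp [wlen, Walk.darts_append]

lemma wlen_reverse {G : SimpleGraph V} {a : V → V → ℝ} (has : ∀ x y, a x y = a y x)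
    {x y : V} (p : G.Walk x y) : wlen G a p.reverse = wlen G a p := by
  simp only [wlen, Walk.darts_reverse, List.map_reverse, List.sum_reverse, List.map_map]
  refine congrArg List.sum (List.map_congr_left fun d _ => ?_)
  simp [Function.comp, Dart.symm, has d.toProd.1 d.toProd.2]

lemma wlen_eq_sum {G : SimpleGraph V} {a : V → V → ℝ} {x y : V} (p : G.Walk x y) :
    wlen G a p = ∑ i ∈ Finset.range p.length, elen a (p.getVert i) (p.getVert (i + 1)) := by
  induction p with
  | nil => simp [wlen_nil]
  | @cons u v w h p ih =>
    rw [wlen_cons, Walk.length_cons, Finset.sum_range_succ']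
    simp only [Walk.getVert_cons_succ, Walk.getVert_zero, ih]
    ring

section pdist
variable {G : SimpleGraph V} {a : V → V → ℝ}

lemma pdist_set_nonempty (hG : G.Preconnected) (x y : V) :
    {L | ∃ p : G.Walk x y, wlen G a p = L}.Nonempty := by
  obtain ⟨p⟩ := hG x y
  exact ⟨wlen G a p, p, rfl⟩

lemma pdist_bddBelow (x y : V) :
    BddBelow {L | ∃ p : G.Walk x y, wlen G a p = L} :=
  ⟨0, fun L ⟨p, hp⟩ => hp ▸ wlen_nonneg p⟩

lemma pdist_nonneg (hG : G.Preconnected) (x y : V) : 0 ≤ pdist G a x y :=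
  le_csInf (pdist_set_nonempty hG x y) fun L ⟨p, hp⟩ => hp ▸ wlen_nonneg p

lemma pdist_le_wlen {x y : V} (p : G.Walk x y) : pdist G a x y ≤ wlen G a p :=
  csInf_le (pdist_bddBelow x y) ⟨p, rfl⟩

lemma pdist_adj_le (hG : G.Preconnected) (x₀ : V) {x y : V} (h : G.Adj x y) :
    pdist G a x₀ y ≤ pdist G a x₀ x + elen a x y := by
  have : ∀ L ∈ {L | ∃ p : G.Walk x₀ x, wlen G a p = L},
      pdist G a x₀ y - elen a x y ≤ L := by
    rintro L ⟨p, rfl⟩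
    have := pdist_le_wlen (a := a) (p.append (Walk.cons h Walk.nil))
    rw [wlen_append, wlen_cons, wlen_nil] at this
    linarith
  have h2 : pdist G a x₀ y - elen a x y ≤ pdist G a x₀ x :=
    le_csInf (pdist_set_nonempty hG x₀ x) this
  linarith

lemma abs_pdist_adj (hG : G.Preconnected) (has : ∀ x y, a x y = a y x) (x₀ : V)
    {x y : V} (h : G.Adj x y) :
    |pdist G a x₀ x - pdist G a x₀ y| ≤ elen a x y := by
  rw [abs_sub_le_iff]
  constructor
  · have := pdist_adj_le (a := a) hG x₀ h.symm
    rw [show elen a y x = elen a x y by rw [elen, elen, has x y]] at this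
    linarith
  · have := pdist_adj_le (a := a) hG x₀ h
    linarith

/-- walk along a chain of adjacent vertices -/
lemma chain_walk (u : ℕ → V) (hadj : ∀ i, G.Adj (u i) (u (i + 1))) :
    ∀ n m, m ≤ n → ∃ p : G.Walk (u m) (u n),
      wlen G a p = ∑ i ∈ Finset.Ico m n, elen a (u i) (u (i + 1)) := by
  intro n
  induction n with
  | zero => intro m hm; obtain rfl : m = 0 := Nat.le_zero.1 hm
            exact ⟨Walk.nil, by simp [wlen_nil]⟩
  | succ n ih =>
    intro m hm
    rcases Nat.lt_or_ge m (n + 1) with hlt | hge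
    · have hm' : m ≤ n := Nat.lt_succ_iff.1 hlt
      obtain ⟨p, hp⟩ := ih m hm'
      refine ⟨p.append (Walk.cons (hadj n) Walk.nil), ?_⟩
      rw [wlen_append, wlen_cons, wlen_nil, hp, Finset.sum_Ico_succ_top hm']
      ring
    · obtain rfl : m = n + 1 := le_antisymm hm hge
      exact ⟨Walk.nil, by simp [wlen_nil]⟩

lemma pdist_chain (has : ∀ x y, a x y = a y x) (u : ℕ → V)
    (hadj : ∀ i, G.Adj (u i) (u (i + 1))) {m n : ℕ} (hmn : m ≤ n) :
    pdist G a (u m) (u n) ≤ ∑ i ∈ Finset.Ico m n, elen a (u i) (u (i + 1)) ∧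
    pdist G a (u n) (u m) ≤ ∑ i ∈ Finset.Ico m n, elen a (u i) (u (i + 1)) := by
  obtain ⟨p, hp⟩ := chain_walk (a := a) u hadj n m hmn
  exact ⟨hp ▸ pdist_le_wlen p, by
    rw [← hp, ← wlen_reverse has p]; exact pdist_le_wlen p.reverse⟩

end pdist

section ball
variable {G : SimpleGraph V} [∀ x : V, Fintype (G.neighborSet x)] {a : V → V → ℝ}

/-- vertices reachable from x₀ by a walk of length ≤ m (walks into x₀). -/
lemma reach_finite (x₀ : V) :
    ∀ m : ℕ, {x : V | ∃ p : G.Walk x x₀, p.length ≤ m}.Finite := by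
  intro m
  induction m with
  | zero =>
    refine Set.Finite.subset (Set.finite_singleton x₀) ?_
    rintro x ⟨p, hp⟩
    cases p with
    | nil => rfl
    | cons h q => simp [Walk.length_cons] at hp
  | succ m ih =>
    refine Set.Finite.subset
      ((ih.biUnion (fun y _ => (G.neighborFinset y).finite_toSet)).union
        (Set.finite_singleton x₀)) ?_
    rintro x ⟨p, hp⟩
    cases p with
    | nil => exact Or.inr rfl
    | @cons _ y _ h q =>
      refine Or.inl (Set.mem_biUnion ⟨q, ?_⟩ ?_)
      · simpa [Walk.length_cons] using hp
      · simp [mem_neighborFinset]; exact h.symm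

/-- stopped function -/
def stopf (f : ℕ → V) (n : ℕ) : ℕ → V := fun i => f (min i n)

variable (G a) in
def GoodFun (x₀ : V) (B : ℝ) (n : ℕ) : Set (ℕ → V) :=
  {f | f 0 = x₀ ∧ (∀ i < n, G.Adj (f i) (f (i + 1))) ∧ (∀ i, f i = f (min i n)) ∧
    ∑ i ∈ Finset.range n, elen a (f i) (f (i + 1)) ≤ B}

lemma stopf_good {x₀ : V} {B : ℝ} {n m : ℕ} (hmn : m ≤ n) {f : ℕ → V}
    (hf : f ∈ GoodFun G a x₀ B n) : stopf f m ∈ GoodFun G a x₀ B m := by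
  obtain ⟨h0, hadj, hstop, hsum⟩ := hf
  have hval : ∀ i ≤ m, stopf f m i = f i := fun i hi => by
    simp [stopf, min_eq_left hi]
  refine ⟨by rw [hval 0 (Nat.zero_le _)]; exact h0, ?_, ?_, ?_⟩
  · intro i hi
    rw [hval i (le_of_lt hi), hval (i+1) hi]
    exact hadj i (lt_of_lt_of_le hi hmn)
  · intro i
    simp [stopf, min_assoc]
  · calc ∑ i ∈ Finset.range m, elen a (stopf f m i) (stopf f m (i + 1))
        = ∑ i ∈ Finset.range m, elen a (f i) (f (i + 1)) := by
          refine Finset.sum_congr rfl fun i hi => ?_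
          rw [Finset.mem_range] at hi
          rw [hval i (le_of_lt hi), hval (i+1) hi]
      _ ≤ ∑ i ∈ Finset.range n, elen a (f i) (f (i + 1)) :=
          Finset.sum_le_sum_of_subset_of_nonneg
            (Finset.range_subset_range.2 hmn) (fun i _ _ => elen_nonneg a _ _)
      _ ≤ B := hsum

lemma goodFun_finite (x₀ : V) (B : ℝ) : ∀ n, (GoodFun G a x₀ B n).Finite := by
  intro n
  induction n with
  | zero =>
    refine Set.Finite.subset (Set.finite_singleton (fun _ => x₀)) ?_
    rintro f ⟨h0, _, hstop, _⟩
    funext i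
    rw [hstop i]
    simpa using h0
  | succ n ih =>
    refine Set.Finite.subset
      (ih.biUnion (fun g _ => ((G.neighborFinset (g n)).finite_toSet).biUnion
        (fun y _ => Set.finite_singleton (fun i => if i ≤ n then g i else y)))) ?_
    intro f hf
    obtain ⟨h0, hadj, hstop, hsum⟩ := hf
    have hgood : stopf f n ∈ GoodFun G a x₀ B n :=
      stopf_good (Nat.le_succ n) ⟨h0, hadj, hstop, hsum⟩
    have h1 : f (n + 1) ∈ (G.neighborFinset (stopf f n n) : Set V) := by
      have hsn : stopf f n n = f n := by simp [stopf]
      rw [hsn]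
      simp only [mem_coe, mem_neighborFinset]
      exact hadj n (Nat.lt_succ_self n)
    have h2 : f ∈ ({fun i => if i ≤ n then stopf f n i else f (n + 1)} : Set (ℕ → V)) := by
      refine Set.mem_singleton_iff.2 ?_
      funext i
      by_cases hi : i ≤ n
      · simp [hi, stopf, min_eq_left hi]
      · have hi' : n + 1 ≤ i := Nat.lt_iff_add_one_le.1 (Nat.lt_of_not_le hi)
        simp only [hi, if_false]
        rw [hstop i, min_eq_right hi']
    exact Set.mem_biUnion hgood (Set.mem_biUnion h1 h2)

lemma goodFun_nonempty (hG : G.Preconnected) (x₀ : V) {R : ℝ}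
    (hinf : {x : V | pdist G a x₀ x ≤ R}.Infinite) (n : ℕ) :
    (GoodFun G a x₀ (R + 1) n).Nonempty := by
  obtain ⟨x, hx, hxn⟩ := hinf.exists_notMem_finset (reach_finite (G := G) x₀ n).toFinset
  rw [Set.mem_setOf_eq] at hx
  -- a walk from x₀ to x of wlen < R + 1
  have hlt : pdist G a x₀ x < R + 1 := lt_of_le_of_lt hx (by linarith)
  obtain ⟨L, ⟨p, rfl⟩, hpL⟩ := exists_lt_of_csInf_lt (pdist_set_nonempty hG x₀ x) hlt
  have hlen : n < p.length := by
    by_contra hle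
    exact hxn (by
      simp only [Set.Finite.mem_toFinset, Set.mem_setOf_eq]
      exact ⟨p.reverse, by rw [Walk.length_reverse]; exact Nat.le_of_not_lt hle⟩)
  refine ⟨fun i => p.getVert (min i n), ?_, ?_, ?_, ?_⟩
  · simp [Walk.getVert_zero]
  · intro i hi
    show G.Adj (p.getVert (min i n)) (p.getVert (min (i + 1) n))
    rw [min_eq_left (le_of_lt hi), min_eq_left hi]
    exact p.adj_getVert_succ (lt_trans hi hlen)
  · intro i; simp [min_assoc]
  · show ∑ i ∈ Finset.range n, elen a (p.getVert (min i n)) (p.getVert (min (i+1) n)) ≤ R + 1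
    calc ∑ i ∈ Finset.range n, elen a (p.getVert (min i n)) (p.getVert (min (i+1) n))
        = ∑ i ∈ Finset.range n, elen a (p.getVert i) (p.getVert (i+1)) := by
          refine Finset.sum_congr rfl fun i hi => ?_
          rw [Finset.mem_range] at hi
          rw [min_eq_left (le_of_lt hi), min_eq_left hi]
      _ ≤ ∑ i ∈ Finset.range p.length, elen a (p.getVert i) (p.getVert (i+1)) :=
          Finset.sum_le_sum_of_subset_of_nonneg
            (Finset.range_subset_range.2 (le_of_lt hlen)) (fun i _ _ => elen_nonneg a _ _)
      _ = wlen G a p := (wlen_eq_sum p).symm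
      _ ≤ R + 1 := le_of_lt hpL


open CategoryTheory in
lemma exists_ray (hG : G.Preconnected) (x₀ : V) {R : ℝ}
    (hinf : {x : V | pdist G a x₀ x ≤ R}.Infinite) :
    ∃ u : ℕ → V, (∀ i, G.Adj (u i) (u (i + 1))) ∧
      ∀ n, ∑ i ∈ Finset.range n, elen a (u i) (u (i + 1)) ≤ R + 1 := by
  set B := R + 1 with hB
  let F : ℕᵒᵖ ⥤ Type _ :=
    { obj := fun n => GoodFun G a x₀ B n.unop
      map := fun {n m} f => TypeCat.ofHom fun g => ⟨stopf g.1 m.unop, stopf_good (leOfHom f.unop) g.2⟩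
      map_id := fun n => by ext g i; exact (g.2.2.2.1 i).symm
      map_comp := fun {n m l} f f' => by ext g i; exact (by
        show stopf g.1 l.unop i = stopf (stopf g.1 m.unop) l.unop i
        simp only [stopf]
        rw [min_eq_left (le_trans (min_le_right i l.unop) (leOfHom f'.unop))]) }
  haveI : ∀ n : ℕᵒᵖ, Finite (F.obj n) := fun n => (goodFun_finite x₀ B n.unop).to_subtype
  haveI : ∀ n : ℕᵒᵖ, Nonempty (F.obj n) := fun n =>
    (goodFun_nonempty hG x₀ hinf n.unop).to_subtype
  obtain ⟨s, hs⟩ := nonempty_sections_of_finite_inverse_system F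
  have hcompat : ∀ {m n : ℕ} (h : m ≤ n),
      stopf (s (Opposite.op n)).1 m = (s (Opposite.op m)).1 := by
    intro m n h
    have := @hs (Opposite.op n) (Opposite.op m) (homOfLE h).op
    exact congrArg Subtype.val this
  set u : ℕ → V := fun i => (s (Opposite.op i)).1 i with hu
  have hun : ∀ {i n : ℕ}, i ≤ n → (s (Opposite.op n)).1 i = u i := by
    intro i n hin
    have := congrFun (hcompat hin) i
    simp only [stopf, min_self] at this
    exact this
  refine ⟨u, ?_, ?_⟩
  · intro i
    have hadj := (s (Opposite.op (i + 1))).2.2.1 i (Nat.lt_succ_self i)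
    rwa [hun (Nat.le_succ i), hun (le_refl (i + 1))] at hadj
  · intro n
    have hsum := (s (Opposite.op n)).2.2.2.2
    calc ∑ i ∈ Finset.range n, elen a (u i) (u (i + 1))
        = ∑ i ∈ Finset.range n, elen a ((s (Opposite.op n)).1 i) ((s (Opposite.op n)).1 (i+1)) := by
          refine Finset.sum_congr rfl fun i hi => ?_
          rw [Finset.mem_range] at hi
          rw [hun (le_of_lt hi), hun hi]
      _ ≤ B := hsum

lemma exists_neighbor [Infinite V] (hG : G.Connected) (x : V) : ∃ y, G.Adj x y := by
  obtain ⟨y, hy⟩ := exists_ne x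
  obtain ⟨p⟩ := hG.preconnected x y
  cases p with
  | nil => exact absurd rfl hy
  | cons h q => exact ⟨_, h⟩

lemma exists_last_dart : ∀ {w x : V} (p : G.Walk w x), w ≠ x →
    ∃ d ∈ p.darts, d.toProd.2 = x := by
  intro w x p
  induction p with
  | nil => intro h; exact absurd rfl h
  | @cons u y z h q ih =>
    intro _
    by_cases hyz : y = z
    · exact ⟨⟨(u, y), h⟩, by simp [Walk.darts_cons], hyz⟩
    · obtain ⟨d, hd, hd2⟩ := ih hyz
      exact ⟨d, by simp [Walk.darts_cons]; exact Or.inr hd, hd2⟩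

lemma ball_finite [Infinite V] (hG : G.Connected)
    (ha : ∀ x y, G.Adj x y → 0 < a x y) (has : ∀ x y, a x y = a y x)
    (hcomp : metComplete G a) (x₀ : V) (R : ℝ) :
    {x : V | pdist G a x₀ x ≤ R}.Finite := by
  rw [← Set.not_infinite]
  intro hinf
  obtain ⟨u, hadj, hbound⟩ := exists_ray hG.preconnected x₀ hinf
  set Sf : ℕ → ℝ := fun n => ∑ i ∈ Finset.range n, elen a (u i) (u (i + 1)) with hSf
  have hmono : Monotone Sf := monotone_nat_of_le_succ fun n => by
    rw [hSf]; simp only [Finset.sum_range_succ]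
    exact le_add_of_nonneg_right (elen_nonneg a _ _)
  have hcauchy : CauchySeq Sf :=
    (tendsto_atTop_ciSup hmono ⟨R + 1, by rintro _ ⟨n, rfl⟩; exact hbound n⟩).cauchySeq
  rw [Metric.cauchySeq_iff] at hcauchy
  -- u is pdist-Cauchy
  have hucauchy : ∀ ε : ℝ, 0 < ε → ∃ N : ℕ, ∀ m ≥ N, ∀ n ≥ N, pdist G a (u m) (u n) < ε := by
    intro ε hε
    obtain ⟨N, hN⟩ := hcauchy ε hε
    refine ⟨N, fun m hm n hn => ?_⟩
    have key : ∀ {i j : ℕ}, i ≤ j → i ≥ N → j ≥ N →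
        pdist G a (u i) (u j) < ε ∧ pdist G a (u j) (u i) < ε := by
      intro i j hij hi hj
      have hle := pdist_chain (a := a) has u hadj hij
      have hIco : ∑ t ∈ Finset.Ico i j, elen a (u t) (u (t + 1)) = Sf j - Sf i := by
        rw [hSf]
        simp only
        rw [Finset.sum_Ico_eq_sub _ hij]
      have hdist := hN j hj i hi
      rw [Real.dist_eq] at hdist
      have h1 : Sf j - Sf i < ε := lt_of_le_of_lt (le_abs_self _) hdist
      rw [hIco] at hle
      exact ⟨lt_of_le_of_lt hle.1 h1, lt_of_le_of_lt hle.2 h1⟩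
    rcases le_total m n with h | h
    · exact (key h hm hn).1
    · exact (key h hn hm).2
  obtain ⟨x, hx⟩ := hcomp u hucauchy
  -- minimal edge length at x
  obtain ⟨y₀, hy₀⟩ := exists_neighbor hG x
  have hne : ((G.neighborFinset x).image fun y => elen a x y).Nonempty :=
    ⟨elen a x y₀, Finset.mem_image_of_mem _ ((mem_neighborFinset G x y₀).2 hy₀)⟩
  set c := ((G.neighborFinset x).image fun y => elen a x y).min' hne with hc
  have hcpos : 0 < c := by
    rw [hc, Finset.lt_min'_iff]
    intro b hb
    obtain ⟨y, hy, rfl⟩ := Finset.mem_image.1 hb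
    exact elen_pos ha ((mem_neighborFinset G x y).1 hy)
  have hkey : ∀ w : V, w ≠ x → c ≤ pdist G a w x := by
    intro w hw
    refine le_csInf (pdist_set_nonempty hG.preconnected w x) ?_
    rintro L ⟨p, rfl⟩
    obtain ⟨d, hd, hd2⟩ := exists_last_dart p hw
    have hadj' : G.Adj d.toProd.1 x := hd2 ▸ d.adj
    have hc1 : c ≤ elen a d.toProd.1 d.toProd.2 := by
      rw [hd2, show elen a d.toProd.1 x = elen a x d.toProd.1 by rw [elen, elen, has]]
      exact Finset.min'_le _ _
        (Finset.mem_image_of_mem _ ((mem_neighborFinset G x d.toProd.1).2 hadj'.symm))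
    refine le_trans hc1 ?_
    refine List.single_le_sum (fun b hb => ?_) _ (List.mem_map_of_mem hd)
    obtain ⟨d', _, rfl⟩ := List.mem_map.1 hb
    exact elen_nonneg a _ _
  obtain ⟨N, hN⟩ := hx c hcpos
  have h1 : u N = x := by
    by_contra hne'
    exact absurd (hN N le_rfl) (not_lt.2 (hkey (u N) hne'))
  have h2 : u (N + 1) = x := by
    by_contra hne'
    exact absurd (hN (N + 1) (Nat.le_succ N)) (not_lt.2 (hkey (u (N + 1)) hne'))
  exact (hadj N).ne (h1.trans h2.symm)

end ball



end aux

open SimpleGraph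

/-- Gaffney-type theorem: bounded valence, complete `δ_a`, quadratic form
bounded below by `k` ⟹ `H = Δ_{1,a} + W` is essentially self-adjoint: for every
`λ < k − 1` the only `ℓ²` solution of `Hv = λv` is `v ≡ 0`. -/
theorem stmt12 (G : SimpleGraph V) [∀ x : V, Fintype (G.neighborSet x)]
    (hG : G.Connected) [Infinite V]
    (N : ℕ) (hdeg : ∀ x, (G.neighborFinset x).card ≤ N)
    (a : V → V → ℝ) (ha : ∀ x y, G.Adj x y → 0 < a x y)
    (has : ∀ x y, a x y = a y x) (W : V → ℝ)
    (hcomp : metComplete G a)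
    (k : ℝ)
    (hk : ∀ g : V → ℝ, (Function.support g).Finite →
      k * ∑ᶠ x, (g x) ^ 2 ≤ ∑ᶠ x, schrod G a W g x * g x) :
    ∀ lam : ℝ, lam < k - 1 → ∀ v : V → ℝ, Summable (fun x => (v x) ^ 2) →
      (∀ x, schrod G a W v x = lam * v x) → v = 0 := by
  classical
  intro lam hlam v hsum heq
  obtain ⟨x₀⟩ : Nonempty V := inferInstance
  set d : V → ℝ := fun x => pdist G a x₀ x with hd
  set M : ℝ := ∑' x, (v x) ^ 2 with hM
  have hM0 : 0 ≤ M := tsum_nonneg fun x => sq_nonneg _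
  have hN0 : (0:ℝ) ≤ (N:ℝ) := Nat.cast_nonneg N
  have main : ∀ R : ℝ, 1 ≤ R → ∀ z, d z ≤ R → (v z) ^ 2 ≤ N * M / (2 * R ^ 2) := by
    intro R hR z hz
    have hR0 : (0:ℝ) < R := lt_of_lt_of_le one_pos hR
    -- cutoff function
    set η : V → ℝ := fun x => max 0 (min 1 (2 - d x / R)) with hη
    have hη0 : ∀ x, 0 ≤ η x := fun x => le_max_left _ _
    have hη1 : ∀ x, η x ≤ 1 := fun x => max_le zero_le_one (min_le_left _ _)
    have hηball : ∀ x, η x ≠ 0 → d x ≤ 2 * R := by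
      intro x hx
      by_contra hgt
      push_neg at hgt
      apply hx
      have h2 : 2 - d x / R ≤ 0 := by
        rw [sub_nonpos, le_div_iff₀ hR0]
        linarith
      show max 0 (min 1 (2 - d x / R)) = 0
      rw [min_eq_right (le_trans h2 zero_le_one), max_eq_left h2]
    have hηone : ∀ x, d x ≤ R → η x = 1 := by
      intro x hx
      have h1 : (1:ℝ) ≤ 2 - d x / R := by
        have : d x / R ≤ 1 := (div_le_one hR0).2 hx
        linarith
      show max 0 (min 1 (2 - d x / R)) = 1
      rw [min_eq_left h1]
      exact max_eq_right zero_le_one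
    have hηlip : ∀ x y, G.Adj x y → |η x - η y| ≤ elen a x y / R := by
      intro x y hxy
      have lipmax : ∀ s t : ℝ, max 0 s - max 0 t ≤ |s - t| := by
        intro s t
        rcases le_total s 0 with h | h
        · rw [max_eq_left h]
          have h1 : (0:ℝ) ≤ max 0 t := le_max_left _ _
          have h2 : (0:ℝ) ≤ |s - t| := abs_nonneg _
          linarith
        · rw [max_eq_right h]
          have h1 : t ≤ max 0 t := le_max_right _ _
          have h2 : s - t ≤ |s - t| := le_abs_self _
          linarith
      have lipmin : ∀ s t : ℝ, min 1 s - min 1 t ≤ |s - t| := by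
        intro s t
        rcases le_total 1 t with h | h
        · rw [min_eq_left h]
          have h1 : min 1 s ≤ 1 := min_le_left _ _
          have h2 : (0:ℝ) ≤ |s - t| := abs_nonneg _
          linarith
        · rw [min_eq_right h]
          have h1 : min 1 s ≤ s := min_le_right _ _
          have h2 : s - t ≤ |s - t| := le_abs_self _
          linarith
      have step1 : |η x - η y| ≤ |min 1 (2 - d x / R) - min 1 (2 - d y / R)| := by
        rw [abs_sub_le_iff]
        constructor
        · exact lipmax _ _
        · rw [abs_sub_comm]
          exact lipmax _ _
      have step2 : |min 1 (2 - d x / R) - min 1 (2 - d y / R)| ≤ |(2 - d x / R) - (2 - d y / R)| := by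
        rw [abs_sub_le_iff]
        constructor
        · exact lipmin _ _
        · rw [abs_sub_comm]
          exact lipmin _ _
      have step3 : |(2 - d x / R) - (2 - d y / R)| = |d x - d y| / R := by
        rw [show (2 - d x / R) - (2 - d y / R) = (d y - d x)/R by ring, abs_div,
          abs_of_pos hR0, abs_sub_comm]
      have step4 : |d x - d y| ≤ elen a x y := abs_pdist_adj hG.preconnected has x₀ hxy
      calc |η x - η y| ≤ |d x - d y| / R := by
            refine le_trans step1 (le_trans step2 ?_)
            rw [step3]
        _ ≤ elen a x y / R := by gcongr
    -- finite ball and finsets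
    have hball := ball_finite hG ha has hcomp x₀ (2 * R)
    set S : Finset V := hball.toFinset with hS
    set T : Finset V := S ∪ S.biUnion (fun x => G.neighborFinset x) with hT
    have hST : S ⊆ T := subset_union_left
    set g : V → ℝ := fun x => η x * v x with hg
    have hmemS : ∀ {x}, η x ≠ 0 → x ∈ S := by
      intro x hx
      rw [hS, Set.Finite.mem_toFinset]
      exact hηball x hx
    have hgsupp : Function.support g ⊆ ↑S := by
      intro x hx
      rw [Function.mem_support] at hx
      have hηx : η x ≠ 0 := by
        intro h
        exact hx (by rw [hg]; simp [h])
      exact hmemS hηx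
    have hgfin : (Function.support g).Finite := Set.Finite.subset S.finite_toSet hgsupp
    have key := hk g hgfin
    have e1 : ∑ᶠ x, g x ^ 2 = ∑ x ∈ S, g x ^ 2 := by
      refine finsum_eq_sum_of_support_subset _ (fun x hx => ?_)
      refine hgsupp ?_
      rw [Function.mem_support] at hx ⊢
      intro h
      exact hx (by rw [h]; ring)
    have e2 : ∑ᶠ x, schrod G a W g x * g x = ∑ x ∈ S, schrod G a W g x * g x := by
      refine finsum_eq_sum_of_support_subset _ (fun x hx => ?_)
      refine hgsupp ?_
      rw [Function.mem_support] at hx ⊢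
      intro h
      exact hx (by rw [h]; ring)
    rw [e1, e2] at key
    -- pointwise identity
    have hpoint : ∀ x, schrod G a W g x * g x
        = lam * g x ^ 2
          + ∑ y ∈ G.neighborFinset x, a x y * (η x - η y) * (η x * v x * v y) := by
      intro x
      have hterm : ∀ y, a x y * (g x - g y) * g x
          = η x ^ 2 * v x * (a x y * (v x - v y)) + a x y * (η x - η y) * (η x * v x * v y) := by
        intro y
        show a x y * (η x * v x - η y * v y) * (η x * v x) = _
        ring
      calc schrod G a W g x * g x
          = ∑ y ∈ G.neighborFinset x, a x y * (g x - g y) * g x + W x * g x * g x := by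
            rw [schrod, add_mul, Finset.sum_mul]
        _ = ∑ y ∈ G.neighborFinset x,
              (η x ^ 2 * v x * (a x y * (v x - v y)) + a x y * (η x - η y) * (η x * v x * v y))
            + W x * g x * g x := by
            rw [Finset.sum_congr rfl fun y _ => hterm y]
        _ = η x ^ 2 * v x * (schrod G a W v x)
            + ∑ y ∈ G.neighborFinset x, a x y * (η x - η y) * (η x * v x * v y) := by
            rw [Finset.sum_add_distrib, ← Finset.mul_sum, schrod]
            show _ = η x ^ 2 * v x * (_ + W x * v x) + _
            rw [hg]
            ring
        _ = lam * g x ^ 2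
            + ∑ y ∈ G.neighborFinset x, a x y * (η x - η y) * (η x * v x * v y) := by
            rw [heq x, hg]
            show η x ^ 2 * v x * (lam * v x) + _ = lam * (η x * v x) ^ 2 + _
            ring
    have hsplit : ∑ x ∈ S, schrod G a W g x * g x
        = lam * ∑ x ∈ S, g x ^ 2
          + ∑ x ∈ S, ∑ y ∈ G.neighborFinset x, a x y * (η x - η y) * (η x * v x * v y) := by
      rw [Finset.mul_sum, ← Finset.sum_add_distrib]
      exact Finset.sum_congr rfl fun x _ => hpoint x
    set Fxy : V → V → ℝ := fun x y => a x y * (η x - η y) * (η x * v x * v y) with hFxy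
    set Q : ℝ := ∑ x ∈ S, ∑ y ∈ G.neighborFinset x, Fxy x y with hQ
    -- rewrite Q as a symmetric double sum over T
    have hQ1 : Q = ∑ x ∈ T, ∑ y ∈ T, (if G.Adj x y then Fxy x y else 0) := by
      rw [hQ]
      rw [Finset.sum_subset hST (fun x _ hxS => Finset.sum_eq_zero fun y _ => by
        have hx0 : η x = 0 := by
          by_contra h
          exact hxS (hmemS h)
        show a x y * (η x - η y) * (η x * v x * v y) = 0
        rw [hx0]
        ring)]
      refine Finset.sum_congr rfl fun x hxT => ?_
      by_cases hx0 : η x = 0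
      · rw [Finset.sum_eq_zero fun y _ => by
            show a x y * (η x - η y) * (η x * v x * v y) = 0
            rw [hx0]; ring,
          Finset.sum_eq_zero fun y _ => ?_]
        have : Fxy x y = 0 := by
          show a x y * (η x - η y) * (η x * v x * v y) = 0
          rw [hx0]; ring
        rw [this, ite_self]
      · have hxS : x ∈ S := hmemS hx0
        have hsub : G.neighborFinset x = T.filter (fun y => G.Adj x y) := by
          ext y
          simp only [mem_neighborFinset, Finset.mem_filter, hT, Finset.mem_union,
            Finset.mem_biUnion]
          constructor
          · intro hy
            exact ⟨Or.inr ⟨x, hxS, hy⟩, hy⟩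
          · rintro ⟨-, hy⟩
            exact hy
        rw [hsub]
        exact Finset.sum_filter _ _
    -- symmetrization
    have hswap : ∀ (f : V → V → ℝ),
        ∑ x ∈ T, ∑ y ∈ T, (if G.Adj x y then f x y else 0)
          = ∑ x ∈ T, ∑ y ∈ T, (if G.Adj x y then f y x else 0) := by
      intro f
      rw [Finset.sum_comm]
      refine Finset.sum_congr rfl fun x _ => Finset.sum_congr rfl fun y _ => ?_
      exact if_congr (G.adj_comm y x) rfl rfl
    have hsym : 2 * Q = ∑ x ∈ T, ∑ y ∈ T,
        (if G.Adj x y then a x y * (η x - η y) ^ 2 * (v x * v y) else 0) := by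
      rw [hQ1, two_mul]
      nth_rewrite 2 [hswap Fxy]
      rw [← Finset.sum_add_distrib]
      refine Finset.sum_congr rfl fun x _ => ?_
      rw [← Finset.sum_add_distrib]
      refine Finset.sum_congr rfl fun y _ => ?_
      by_cases hadj : G.Adj x y
      · rw [if_pos hadj, if_pos hadj, if_pos hadj]
        show a x y * (η x - η y) * (η x * v x * v y)
            + a y x * (η y - η x) * (η y * v y * v x) = _
        rw [has y x]
        ring
      · rw [if_neg hadj, if_neg hadj, if_neg hadj]
        ring
    -- bound the symmetric sum
    have hbound1 : ∑ x ∈ T, ∑ y ∈ T,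
        (if G.Adj x y then a x y * (η x - η y) ^ 2 * (v x * v y) else 0)
        ≤ ∑ x ∈ T, ∑ y ∈ T,
          (if G.Adj x y then (1 / R ^ 2) * ((v x ^ 2 + v y ^ 2) / 2) else 0) := by
      refine Finset.sum_le_sum fun x _ => Finset.sum_le_sum fun y _ => ?_
      by_cases hadj : G.Adj x y
      · rw [if_pos hadj, if_pos hadj]
        have hapos := ha x y hadj
        have h1 : a x y * (η x - η y) ^ 2 ≤ 1 / R ^ 2 := by
          have hl := hηlip x y hadj
          have hsq : (η x - η y) ^ 2 ≤ (elen a x y / R) ^ 2 := by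
            rw [← sq_abs (η x - η y)]
            exact pow_le_pow_left₀ (abs_nonneg _) hl 2
          have helen2 : (elen a x y) ^ 2 = 1 / a x y := by
            rw [elen, div_pow, one_pow, Real.sq_sqrt hapos.le]
          calc a x y * (η x - η y) ^ 2 ≤ a x y * ((elen a x y / R) ^ 2) := by gcongr
            _ = a x y * (1 / a x y / R ^ 2) := by rw [div_pow, helen2]
            _ = 1 / R ^ 2 := by field_simp
        have h2 : v x * v y ≤ (v x ^ 2 + v y ^ 2) / 2 := by
          nlinarith [sq_nonneg (v x - v y)]
        calc a x y * (η x - η y) ^ 2 * (v x * v y)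
            ≤ a x y * (η x - η y) ^ 2 * ((v x ^ 2 + v y ^ 2) / 2) :=
              mul_le_mul_of_nonneg_left h2 (mul_nonneg hapos.le (sq_nonneg _))
          _ ≤ (1 / R ^ 2) * ((v x ^ 2 + v y ^ 2) / 2) := by
              refine mul_le_mul_of_nonneg_right h1 ?_
              positivity
      · rw [if_neg hadj, if_neg hadj]
    have hA3 : ∑ x ∈ T, ∑ y ∈ T, (if G.Adj x y then v x ^ 2 else 0) ≤ N * M := by
      have hinner : ∀ x, ∑ y ∈ T, (if G.Adj x y then v x ^ 2 else 0) ≤ N * v x ^ 2 := by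
        intro x
        rw [← Finset.sum_filter, Finset.sum_const, nsmul_eq_mul]
        refine mul_le_mul_of_nonneg_right ?_ (sq_nonneg _)
        have hsub : T.filter (fun y => G.Adj x y) ⊆ G.neighborFinset x := fun y hy =>
          (mem_neighborFinset G x y).2 (Finset.mem_filter.1 hy).2
        exact_mod_cast le_trans (Nat.cast_le.2 (Finset.card_le_card hsub))
          (Nat.cast_le.2 (hdeg x))
      calc ∑ x ∈ T, ∑ y ∈ T, (if G.Adj x y then v x ^ 2 else 0)
          ≤ ∑ x ∈ T, (N : ℝ) * v x ^ 2 := Finset.sum_le_sum fun x _ => hinner x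
        _ = (N : ℝ) * ∑ x ∈ T, v x ^ 2 := by rw [Finset.mul_sum]
        _ ≤ (N : ℝ) * M := by
            refine mul_le_mul_of_nonneg_left ?_ hN0
            exact Summable.sum_le_tsum T (fun x _ => sq_nonneg _) hsum
    have hsplit2 : ∑ x ∈ T, ∑ y ∈ T,
        (if G.Adj x y then (1 / R ^ 2) * ((v x ^ 2 + v y ^ 2) / 2) else 0)
        = (1 / (2 * R ^ 2)) *
          (∑ x ∈ T, ∑ y ∈ T, (if G.Adj x y then v x ^ 2 else 0)
            + ∑ x ∈ T, ∑ y ∈ T, (if G.Adj x y then v y ^ 2 else 0)) := by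
      rw [← Finset.sum_add_distrib, Finset.mul_sum]
      refine Finset.sum_congr rfl fun x _ => ?_
      rw [← Finset.sum_add_distrib, Finset.mul_sum]
      refine Finset.sum_congr rfl fun y _ => ?_
      by_cases hadj : G.Adj x y
      · rw [if_pos hadj, if_pos hadj, if_pos hadj,
          show (1:ℝ)/(2*R^2) = (1/R^2)/2 by rw [div_div, mul_comm]]
        ring
      · rw [if_neg hadj, if_neg hadj, if_neg hadj]
        ring
    have hyy : ∑ x ∈ T, ∑ y ∈ T, (if G.Adj x y then v y ^ 2 else 0)
        = ∑ x ∈ T, ∑ y ∈ T, (if G.Adj x y then v x ^ 2 else 0) := by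
      exact (hswap (fun x y => v x ^ 2)).symm
    -- put it together
    have hQbound : Q ≤ N * M / (2 * R ^ 2) := by
      have h2Q : 2 * Q ≤ (1 / (2 * R ^ 2)) * (N * M + N * M) := by
        rw [hsym]
        refine le_trans hbound1 ?_
        rw [hsplit2, hyy]
        have hpos : (0:ℝ) ≤ 1 / (2 * R ^ 2) := by positivity
        nlinarith [hA3]
      have : (1 / (2 * R ^ 2)) * (N * M + N * M) = 2 * (N * M / (2 * R ^ 2)) := by
        field_simp
        ring
      linarith
    have hSig0 : (0:ℝ) ≤ ∑ x ∈ S, g x ^ 2 := Finset.sum_nonneg fun x _ => sq_nonneg _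
    have hklam : (1:ℝ) ≤ k - lam := by linarith
    have hQ2 : (k - lam) * (∑ x ∈ S, g x ^ 2) ≤ Q := by
      rw [hsplit] at key
      rw [hQ]
      linarith
    have hSigle : ∑ x ∈ S, g x ^ 2 ≤ N * M / (2 * R ^ 2) := by
      nlinarith
    -- extract the single term
    have hzS : z ∈ S := by
      rw [hS, Set.Finite.mem_toFinset]
      show d z ≤ 2 * R
      linarith
    have hgz : g z ^ 2 = v z ^ 2 := by
      rw [hg]
      show (η z * v z) ^ 2 = v z ^ 2
      rw [hηone z hz]
      ring
    calc v z ^ 2 = g z ^ 2 := hgz.symm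
      _ ≤ ∑ x ∈ S, g x ^ 2 := Finset.single_le_sum (fun x _ => sq_nonneg (g x)) hzS
      _ ≤ N * M / (2 * R ^ 2) := hSigle
  -- conclude v = 0
  funext z
  show v z = 0
  by_contra hvz
  have hv2 : 0 < v z ^ 2 := lt_of_le_of_ne (sq_nonneg _) (Ne.symm (pow_ne_zero 2 hvz))
  set C : ℝ := N * M / 2 with hC
  have hC0 : 0 ≤ C := by positivity
  set R : ℝ := max (max 1 (d z)) ((C + 1) / v z ^ 2) with hR
  have hR1 : (1:ℝ) ≤ R := le_trans (le_max_left 1 (d z)) (le_max_left _ _)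
  have hRz : d z ≤ R := le_trans (le_max_right 1 (d z)) (le_max_left _ _)
  have hRC : (C + 1) / v z ^ 2 ≤ R := le_max_right _ _
  have h := main R hR1 z hRz
  have hNM : N * M / (2 * R ^ 2) = C / R ^ 2 := by
    rw [hC]
    ring
  rw [hNM] at h
  have hcontra : C / R ^ 2 < v z ^ 2 := by
    rw [div_lt_iff₀ (by positivity)]
    have h1 : C + 1 ≤ R * v z ^ 2 := by
      rw [div_le_iff₀ hv2] at hRC
      linarith
    nlinarith
  linarith
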